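/- Let A, B, C be subspaces of a finite-dimensional vector space U over a field, and let D be a subspace with D ⊆ A ∩ B. Then the eight subspaces A ∩ B ∩ C ∩ D, A ∩ B ∩ C, D, A ∩ B, A ∩ C, B ∩ C, A, B are coordinated. -/

import Mathlib

open Submodule Set

private lemma coord_ext {𝔽 U : Type*} [Field 𝔽] [AddCommGroup U] [Module 𝔽 U]
    {X : Set U} (hX : LinearIndependent 𝔽 (fun x : X => (x : U))) (V : Submodule 𝔽 U)
    (h : V ⊓ Submodule.span 𝔽 X ≤ Submodule.span 𝔽 (X ∩ V)) :
    ∃ Y : Set U, X ⊆ Y ∧ LinearIndependent 𝔽 (fun x : Y => (x : U)) ∧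
      V ≤ Submodule.span 𝔽 (Y ∩ V) ∧
      Submodule.span 𝔽 Y = Submodule.span 𝔽 X ⊔ V := by
  obtain ⟨Y, hYt, hXY, htY, hYind⟩ :=
    exists_linearIndepOn_id_extension hX (Set.subset_union_left (t := (V : Set U)))
  refine ⟨Y, hXY, hYind, ?_, ?_⟩
  · intro v hv
    have hvY : v ∈ Submodule.span 𝔽 Y := htY (Or.inr hv)
    have hsplit : Submodule.span 𝔽 Y =
        Submodule.span 𝔽 (Y ∩ V) ⊔ Submodule.span 𝔽 (Y \ (V : Set U)) := by
      rw [← Submodule.span_union]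
      congr 1
      exact (Set.inter_union_diff Y (V : Set U)).symm
    rw [hsplit] at hvY
    obtain ⟨a, ha, b, hb, hab⟩ := Submodule.mem_sup.mp hvY
    have haV : a ∈ V := by
      have : Submodule.span 𝔽 (Y ∩ V) ≤ V :=
        Submodule.span_le.mpr fun x hx => hx.2
      exact this ha
    have hbX : b ∈ Submodule.span 𝔽 X := by
      refine Submodule.span_mono ?_ hb
      intro x hx
      rcases hYt hx.1 with h1 | h1
      · exact h1
      · exact absurd h1 hx.2
    have hbV : b ∈ V := by
      have : b = v - a := by rw [← hab]; exact (add_sub_cancel_left a b).symm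
      rw [this]; exact V.sub_mem hv haV
    have hbYV : b ∈ Submodule.span 𝔽 (Y ∩ V) :=
      Submodule.span_mono (Set.inter_subset_inter hXY le_rfl) (h ⟨hbV, hbX⟩)
    rw [← hab]
    exact Submodule.add_mem _ ha hbYV
  · refine le_antisymm (Submodule.span_le.mpr ?_) (sup_le (Submodule.span_mono hXY) ?_)
    · intro x hx
      rcases hYt hx with h1 | h1
      · exact Submodule.mem_sup_left (Submodule.subset_span h1)
      · exact Submodule.mem_sup_right h1
    · intro v hv
      exact htY (Or.inr hv)

private lemma coord_mono {𝔽 U : Type*} [Field 𝔽] [AddCommGroup U] [Module 𝔽 U]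
    {X X' : Set U} {S V : Submodule 𝔽 U} (hXX : X' ⊆ X) (hSV : S ≤ V)
    (h : S ≤ Submodule.span 𝔽 (X' ∩ S)) : S ≤ Submodule.span 𝔽 (X ∩ V) :=
  h.trans (Submodule.span_mono (Set.inter_subset_inter hXX hSV))

/-- For subspaces `A, B, C` of a finite-dimensional vector space and a
subspace `D ⊆ A ∩ B`, the eight subspaces
`A ∩ B ∩ C ∩ D, A ∩ B ∩ C, D, A ∩ B, A ∩ C, B ∩ C, A, B` are coordinated. -/
theorem eight_subspaces_coordinated {𝔽 U : Type*} [Field 𝔽] [AddCommGroup U] [Module 𝔽 U]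
    [FiniteDimensional 𝔽 U] (A B C D : Submodule 𝔽 U) (hD : D ≤ A ⊓ B) :
    ∃ X : Set U, LinearIndependent 𝔽 (fun x : X => (x : U)) ∧
      Submodule.span 𝔽 (X ∩ ((A ⊓ B ⊓ C ⊓ D : Submodule 𝔽 U) : Set U)) = A ⊓ B ⊓ C ⊓ D ∧
      Submodule.span 𝔽 (X ∩ ((A ⊓ B ⊓ C : Submodule 𝔽 U) : Set U)) = A ⊓ B ⊓ C ∧
      Submodule.span 𝔽 (X ∩ (D : Set U)) = D ∧
      Submodule.span 𝔽 (X ∩ ((A ⊓ B : Submodule 𝔽 U) : Set U)) = A ⊓ B ∧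
      Submodule.span 𝔽 (X ∩ ((A ⊓ C : Submodule 𝔽 U) : Set U)) = A ⊓ C ∧
      Submodule.span 𝔽 (X ∩ ((B ⊓ C : Submodule 𝔽 U) : Set U)) = B ⊓ C ∧
      Submodule.span 𝔽 (X ∩ (A : Set U)) = A ∧
      Submodule.span 𝔽 (X ∩ (B : Set U)) = B := by
  set S0 : Submodule 𝔽 U := A ⊓ B ⊓ C ⊓ D with hS0def
  set S1 : Submodule 𝔽 U := A ⊓ B ⊓ C with hS1def
  set S3 : Submodule 𝔽 U := A ⊓ B with hS3def
  set S4 : Submodule 𝔽 U := A ⊓ C with hS4def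
  set S5 : Submodule 𝔽 U := B ⊓ C with hS5def
  have hS01 : S0 ≤ S1 := inf_le_left
  have hS0D : S0 ≤ D := inf_le_right
  have hS13 : S1 ≤ S3 := inf_le_left
  have hD3 : D ≤ S3 := hD
  have hS14 : S1 ≤ S4 := by
    rw [hS1def, hS4def]
    exact le_inf (inf_le_left.trans inf_le_left) inf_le_right
  have hS15 : S1 ≤ S5 := by
    rw [hS1def, hS5def]
    exact le_inf (inf_le_left.trans inf_le_right) inf_le_right
  have hS3A : S3 ≤ A := inf_le_left
  have hS3B : S3 ≤ B := inf_le_right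
  have hS4A : S4 ≤ A := inf_le_left
  have hS5B : S5 ≤ B := inf_le_left
  -- Step 0 : basis of S0
  obtain ⟨X0, _, hX0ind, hX0span, hX0eq⟩ :=
    coord_ext (X := (∅ : Set U)) (linearIndependent_empty 𝔽 U) S0 (by simp)
  rw [Submodule.span_empty, bot_sup_eq] at hX0eq
  -- Step 1 : extend to S1
  obtain ⟨X1, hX01, hX1ind, hX1span, hX1eq⟩ := coord_ext hX0ind S1 (by
    rw [hX0eq]
    calc S1 ⊓ S0 ≤ S0 := inf_le_right
    _ ≤ Submodule.span 𝔽 (X0 ∩ S1) := coord_mono (le_refl X0) hS01 hX0span)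
  rw [hX0eq, sup_eq_right.mpr hS01] at hX1eq
  -- Step 2 : extend to D
  obtain ⟨X2, hX12, hX2ind, hX2span, hX2eq⟩ := coord_ext hX1ind D (by
    rw [hX1eq]
    have : D ⊓ S1 ≤ S0 := by
      rw [hS0def, hS1def]
      exact le_inf inf_le_right inf_le_left
    exact this.trans (coord_mono hX01 hS0D hX0span))
  rw [hX1eq] at hX2eq
  -- Step 3 : extend to S3 = A ⊓ B
  obtain ⟨X3, hX23, hX3ind, hX3span, hX3eq⟩ := coord_ext hX2ind S3 (by
    rw [hX2eq]
    refine inf_le_right.trans (sup_le ?_ ?_)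
    · exact coord_mono hX12 hS13 hX1span
    · exact coord_mono (le_refl X2) hD3 hX2span)
  rw [hX2eq, sup_eq_right.mpr (sup_le hS13 hD3)] at hX3eq
  have hX13 : X1 ⊆ X3 := hX12.trans hX23
  -- Step 4 : extend to S4 = A ⊓ C
  obtain ⟨X4, hX34, hX4ind, hX4span, hX4eq⟩ := coord_ext hX3ind S4 (by
    rw [hX3eq]
    have : S4 ⊓ S3 ≤ S1 := by
      rw [hS1def, hS3def, hS4def]
      exact le_inf (le_inf (inf_le_right.trans inf_le_left) (inf_le_right.trans inf_le_right))
        (inf_le_left.trans inf_le_right)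
    exact this.trans (coord_mono hX13 hS14 hX1span))
  rw [hX3eq] at hX4eq
  have hX14 : X1 ⊆ X4 := hX13.trans hX34
  have hX24 : X2 ⊆ X4 := hX23.trans hX34
  -- Step 5 : extend to S5 = B ⊓ C
  obtain ⟨X5, hX45, hX5ind, hX5span, hX5eq⟩ := coord_ext hX4ind S5 (by
    rw [hX4eq]
    have h1 : S5 ⊓ (S3 ⊔ S4) ≤ S1 := by
      have hA : S3 ⊔ S4 ≤ A := sup_le hS3A hS4A
      have : S5 ⊓ (S3 ⊔ S4) ≤ S5 ⊓ A := inf_le_inf_left _ hA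
      refine this.trans ?_
      rw [hS1def, hS5def]
      exact le_inf (le_inf inf_le_right (inf_le_left.trans inf_le_left))
        (inf_le_left.trans inf_le_right)
    exact h1.trans (coord_mono hX14 hS15 hX1span))
  rw [hX4eq] at hX5eq
  have hX35 : X3 ⊆ X5 := hX34.trans hX45
  -- Step 6 : extend to A
  obtain ⟨X6, hX56, hX6ind, hX6span, hX6eq⟩ := coord_ext hX5ind A (by
    rw [hX5eq]
    have hmod : A ⊓ (S3 ⊔ S4 ⊔ S5) = A ⊓ S5 ⊔ (S3 ⊔ S4) := by
      rw [sup_comm (S3 ⊔ S4) S5]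
      exact (inf_sup_assoc_of_le _ (sup_le hS3A hS4A)).symm
    rw [hmod]
    refine sup_le ?_ (sup_le ?_ ?_)
    · have : A ⊓ S5 ≤ S1 := by
        rw [hS1def, hS5def]
        exact le_inf (le_inf inf_le_left (inf_le_right.trans inf_le_left))
          (inf_le_right.trans inf_le_right)
      exact this.trans (coord_mono (hX14.trans hX45) (hS14.trans hS4A) hX1span)
    · exact coord_mono hX35 hS3A hX3span
    · exact coord_mono hX45 hS4A hX4span)
  rw [hX5eq] at hX6eq
  have hX36 : X3 ⊆ X6 := hX35.trans hX56
  -- Step 7 : extend to B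
  obtain ⟨X7, hX67, hX7ind, hX7span, hX7eq⟩ := coord_ext hX6ind B (by
    rw [hX6eq]
    have hsimp : S3 ⊔ S4 ⊔ S5 ⊔ A = A ⊔ S5 := by
      refine le_antisymm ?_ ?_
      · exact sup_le (sup_le (sup_le (hS3A.trans le_sup_left) (hS4A.trans le_sup_left))
          le_sup_right) le_sup_left
      · exact sup_le le_sup_right (le_sup_right.trans le_sup_left)
    rw [hsimp, ← inf_sup_assoc_of_le A hS5B]
    refine sup_le ?_ ?_
    · have : B ⊓ A ≤ S3 := by rw [hS3def]; exact le_inf inf_le_right inf_le_left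
      exact this.trans (coord_mono hX36 hS3B hX3span)
    · exact coord_mono hX56 hS5B hX5span)
  -- Assemble
  have hX07 : X0 ⊆ X7 := (hX01.trans hX13).trans (hX35.trans (hX56.trans hX67))
  have hX17 : X1 ⊆ X7 := hX13.trans (hX35.trans (hX56.trans hX67))
  have hX27 : X2 ⊆ X7 := hX24.trans (hX45.trans (hX56.trans hX67))
  have hX37 : X3 ⊆ X7 := hX36.trans hX67
  have hX47 : X4 ⊆ X7 := hX45.trans (hX56.trans hX67)
  have hX57 : X5 ⊆ X7 := hX56.trans hX67
  have key : ∀ (S : Submodule 𝔽 U) (X' : Set U), X' ⊆ X7 →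
      S ≤ Submodule.span 𝔽 (X' ∩ S) → Submodule.span 𝔽 (X7 ∩ (S : Set U)) = S := by
    intro S X' hX' h
    refine le_antisymm (Submodule.span_le.mpr fun x hx => hx.2) ?_
    exact coord_mono hX' le_rfl h
  exact ⟨X7, hX7ind, key S0 X0 hX07 hX0span, key S1 X1 hX17 hX1span,
    key D X2 hX27 hX2span, key S3 X3 hX37 hX3span, key S4 X4 hX47 hX4span,
    key S5 X5 hX57 hX5span, key A X6 hX67 hX6span, key B X7 le_rfl hX7span⟩
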